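/- If every branch produced by the splitting rule for X·u = a·v is unsatisfiable — namely (i) u = a·v with X ↦ ε is unsatisfiable and (ii) the equation obtained by substituting a·X for X, i.e. X'·u[X ↦ a·X'] = v[X ↦ a·X'], is unsatisfiable — then X·u = a·v is unsatisfiable. -/

import Mathlib

/-- Extension of an assignment `h : Γ → Σ*` to terms (lists over `Σ ⊕ Γ`). -/
def applyH {S G : Type*} (h : G → List S) (t : List (S ⊕ G)) : List S :=
  t.flatMap (Sum.elim (fun a => [a]) h)

/-- Substitute the term `s` for every occurrence of the variable `X` in `t`. -/
def substVar {S G : Type*} [DecidableEq S] [DecidableEq G]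
    (X : G) (s : List (S ⊕ G)) (t : List (S ⊕ G)) : List (S ⊕ G) :=
  t.flatMap (fun c => if c = Sum.inr X then s else [c])

lemma applyH_cons {S G : Type*} (h : G → List S) (c : S ⊕ G) (t : List (S ⊕ G)) :
    applyH h (c :: t) = Sum.elim (fun a => [a]) h c ++ applyH h t := by
  simp [applyH]

lemma applyH_substVar {S G : Type*} [DecidableEq S] [DecidableEq G]
    (h : G → List S) (X : G) (s t : List (S ⊕ G)) :
    applyH h (substVar X s t) = applyH (Function.update h X (applyH h s)) t := by
  induction t with
  | nil => rfl
  | cons c t ih =>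
    have : substVar X s (c :: t) = (if c = Sum.inr X then s else [c]) ++ substVar X s t := by
      simp [substVar]
    rw [this, applyH_cons]
    have happ : ∀ x y : List (S ⊕ G), applyH h (x ++ y) = applyH h x ++ applyH h y := by
      intro x y; simp [applyH]
    rw [happ, ih]
    congr 1
    rcases c with a | Y
    · simp [applyH]
    · by_cases hY : Y = X
      · subst hY; simp [applyH]
      · simp [applyH, Sum.inr.injEq, hY, Function.update_of_ne hY]

theorem stmt11 {S G : Type*} [DecidableEq S] [DecidableEq G]
    (X : G) (a : S) (u v : List (S ⊕ G))
    (h1 : ¬ ∃ h : G → List S,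
        applyH h (substVar X [] u) = applyH h (substVar X [] (Sum.inl a :: v)))
    (h2 : ¬ ∃ h : G → List S,
        applyH h (Sum.inr X :: substVar X [Sum.inl a, Sum.inr X] u) =
          applyH h (substVar X [Sum.inl a, Sum.inr X] v)) :
    ¬ ∃ h : G → List S, applyH h (Sum.inr X :: u) = applyH h (Sum.inl a :: v) := by
  rintro ⟨h, hh⟩
  rw [applyH_cons, applyH_cons] at hh
  simp only [Sum.elim_inr, Sum.elim_inl] at hh
  rcases hX : h X with _ | ⟨b, w⟩
  · apply h1
    refine ⟨h, ?_⟩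
    rw [applyH_substVar, applyH_substVar]
    have hup : Function.update h X (applyH h ([] : List (S ⊕ G))) = h := by
      rw [show applyH h ([] : List (S ⊕ G)) = [] from rfl, ← hX, Function.update_eq_self]
    rw [hup, applyH_cons]
    simp only [Sum.elim_inl]
    rw [hX] at hh
    simpa using hh
  · rw [hX] at hh
    simp only [List.cons_append, List.cons.injEq] at hh
    obtain ⟨hb, hh⟩ := hh; rw [hb] at hX
    apply h2
    refine ⟨Function.update h X w, ?_⟩
    rw [applyH_cons]
    simp only [Sum.elim_inr, Function.update_self]
    rw [applyH_substVar, applyH_substVar]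
    have : applyH (Function.update h X w) [Sum.inl a, Sum.inr X] = a :: w := by
      simp only [applyH, List.flatMap_cons, List.flatMap_nil, Sum.elim_inl, Sum.elim_inr,
        Function.update_self, List.singleton_append, List.append_nil]
    rw [this]
    have hup : Function.update (Function.update h X w) X (a :: w) = h := by
      rw [Function.update_idem, ← hX, Function.update_eq_self]
    rw [hup, hh]; rfl
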